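/- Let l, a, c, d, β₀, b be positive real numbers with a·b − c = d. Among the two roots of the quadratic l·c²·x² − (2·a·c·l + β₀·d)·x + a²·l = 0, exactly one lies in the open interval (0, a/c): namely x₂ = (2·a·c·l + β₀·d − √(β₀²·d² + 4·a·c·l·d·β₀))/(2·l·c²), while the other root is strictly greater than a/c. -/

import Mathlib

/-- Theorem 2 feasibility: among the two roots of the KKT quadratic, exactly one,
namely `x₂`, lies in `(0, a/c)`, while the other root exceeds `a/c`. -/
theorem stmt_12 (l a c d β₀ b : ℝ) (hl : 0 < l) (ha : 0 < a) (hc : 0 < c)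
    (hd : 0 < d) (hβ : 0 < β₀) (hb : 0 < b) (habc : a * b - c = d) :
    (l * c ^ 2 * ((2 * a * c * l + β₀ * d
        - Real.sqrt (β₀ ^ 2 * d ^ 2 + 4 * a * c * l * d * β₀)) / (2 * l * c ^ 2)) ^ 2
      - (2 * a * c * l + β₀ * d) * ((2 * a * c * l + β₀ * d
        - Real.sqrt (β₀ ^ 2 * d ^ 2 + 4 * a * c * l * d * β₀)) / (2 * l * c ^ 2))
      + a ^ 2 * l = 0) ∧
    (l * c ^ 2 * ((2 * a * c * l + β₀ * d
        + Real.sqrt (β₀ ^ 2 * d ^ 2 + 4 * a * c * l * d * β₀)) / (2 * l * c ^ 2)) ^ 2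
      - (2 * a * c * l + β₀ * d) * ((2 * a * c * l + β₀ * d
        + Real.sqrt (β₀ ^ 2 * d ^ 2 + 4 * a * c * l * d * β₀)) / (2 * l * c ^ 2))
      + a ^ 2 * l = 0) ∧
    ((2 * a * c * l + β₀ * d - Real.sqrt (β₀ ^ 2 * d ^ 2 + 4 * a * c * l * d * β₀))
        / (2 * l * c ^ 2) ∈ Set.Ioo 0 (a / c)) ∧
    a / c < (2 * a * c * l + β₀ * d + Real.sqrt (β₀ ^ 2 * d ^ 2 + 4 * a * c * l * d * β₀))
        / (2 * l * c ^ 2) := by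

  have hE : (0:ℝ) < β₀ ^ 2 * d ^ 2 + 4 * a * c * l * d * β₀ := by positivity
  set s := Real.sqrt (β₀ ^ 2 * d ^ 2 + 4 * a * c * l * d * β₀) with hsdef
  have hs0 : 0 < s := Real.sqrt_pos.mpr hE
  have hs2 : s ^ 2 = β₀ ^ 2 * d ^ 2 + 4 * a * c * l * d * β₀ := Real.sq_sqrt hE.le
  have hslt : s < 2 * a * c * l + β₀ * d := by
    rw [hsdef, show (2:ℝ) * a * c * l + β₀ * d = Real.sqrt ((2 * a * c * l + β₀ * d)^2) by
      rw [Real.sqrt_sq (by positivity)]]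
    apply Real.sqrt_lt_sqrt hE.le
    nlinarith [sq_nonneg (a*c*l), mul_pos (mul_pos (mul_pos ha hc) hl) (mul_pos ha hc)]
  have hgt : β₀ * d < s := by
    rw [hsdef, show β₀ * d = Real.sqrt ((β₀ * d)^2) by rw [Real.sqrt_sq (by positivity)]]
    apply Real.sqrt_lt_sqrt (by positivity)
    nlinarith [mul_pos (mul_pos (mul_pos (mul_pos ha hc) hl) hd) hβ]
  refine ⟨?_, ?_, ⟨?_, ?_⟩, ?_⟩
  · field_simp
    linear_combination hs2
  · field_simp
    linear_combination hs2
  · apply div_pos (by linarith) (by positivity)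
  · rw [div_lt_div_iff₀ (by positivity) hc]
    nlinarith [mul_pos hc (sub_pos.mpr hgt)]
  · rw [div_lt_div_iff₀ hc (by positivity)]
    nlinarith [mul_pos (add_pos (mul_pos hβ hd) hs0) hc]
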